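/- Consider a tree-structured latent model rooted at i with latent pmf q(y) = ρ(y_i)·Π_{v≠i} t_v(y_v, y_{par(v)}) and a noisy-or observation X with P(X=0 | Y=y) = S(y) = (1-l)·Π_v (f_v)^{[y_v]}. Let k be a child of i, and assume ρ(0) > 0, ρ(1) > 0, and t_k(d, 0) > 0 for both d ∈ {0,1}. Then (Σ_{d} t_k(d,1)·g_k(d)) / (Σ_{d} t_k(d,0)·g_k(d)) = (Σ_{d} P(Y_k=d | Y_i=1)·P(X=0 | Y_i=0, Y_k=d)) / P(X=0 | Y_i=0); i.e., the subtree correction factor c_{i,j,k} equals an expression computable from low-order conditional moments. -/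

import Mathlib

open Finset

-- The subtree of node `k`: all nodes whose iterated parent reaches `k`.
open Classical in
noncomputable def subtree (m : ℕ) (par : Fin m → Fin m) (k : Fin m) : Finset (Fin m) :=
  Finset.univ.filter fun v => ∃ n : ℕ, par^[n] v = k

/-- The subtree evidence function `g_k(c)`, with functions `z : T(k) → {0,1}`
encoded as `z : Fin m → Bool` forced to be `false` outside the subtree. -/
noncomputable def gfun (m : ℕ) (par : Fin m → Fin m) (t : Fin m → Bool → Bool → ℝ)
    (f : Fin m → ℝ) (k : Fin m) (c : Bool) : ℝ :=
  ∑ z : Fin m → Bool,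
    if z k = c ∧ ∀ v, v ∉ subtree m par k → z v = false then
      (∏ v ∈ (subtree m par k).erase k, t v (z v) (z (par v))) *
        ∏ v ∈ subtree m par k, (if z v then f v else 1)
    else 0

/-- The tree latent pmf `q(y) = ρ(y_i) ∏_{v ≠ i} t_v(y_v, y_{par v})`. -/
noncomputable def qfun (m : ℕ) (i : Fin m) (par : Fin m → Fin m) (ρ : Bool → ℝ)
    (t : Fin m → Bool → Bool → ℝ) (y : Fin m → Bool) : ℝ :=
  ρ (y i) * ∏ v : Fin m, if v = i then 1 else t v (y v) (y (par v))

/-- The noisy-or off-probability `S(y) = (1-l) ∏_v f_v^{[y_v]}`. -/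
noncomputable def Sfun (m : ℕ) (l : ℝ) (f : Fin m → ℝ) (y : Fin m → Bool) : ℝ :=
  (1 - l) * ∏ v : Fin m, if y v then f v else 1

section aux
variable {m : ℕ} {par : Fin m → Fin m}

lemma mem_subtree {k v : Fin m} : v ∈ subtree m par k ↔ ∃ n : ℕ, par^[n] v = k := by
  simp [subtree]

lemma self_mem_subtree (k : Fin m) : k ∈ subtree m par k :=
  mem_subtree.2 ⟨0, rfl⟩

lemma par_mem_subtree {k v : Fin m} (hv : v ∈ subtree m par k) (hvk : v ≠ k) :
    par v ∈ subtree m par k := by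
  obtain ⟨n, hn⟩ := mem_subtree.1 hv
  cases n with
  | zero => exact absurd hn hvk
  | succ n => exact mem_subtree.2 ⟨n, by rw [← hn, Function.iterate_succ_apply]⟩

lemma mem_subtree_of_par {k v : Fin m} (hv : par v ∈ subtree m par k) :
    v ∈ subtree m par k := by
  obtain ⟨n, hn⟩ := mem_subtree.1 hv
  exact mem_subtree.2 ⟨n + 1, by rw [Function.iterate_succ_apply]; exact hn⟩

variable {i : Fin m} (hreach : ∀ v : Fin m, ∃ n : ℕ, par^[n] v = i)

/-- depth of a node -/
noncomputable def depth (hreach : ∀ v : Fin m, ∃ n : ℕ, par^[n] v = i) (v : Fin m) : ℕ :=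
  Nat.find (hreach v)

lemma depth_spec (v : Fin m) : par^[depth hreach v] v = i := Nat.find_spec (hreach v)

lemma depth_par {v : Fin m} (hv : v ≠ i) :
    depth hreach v = depth hreach (par v) + 1 := by
  have h1 : depth hreach v ≠ 0 := by
    intro h0
    exact hv (by simpa [h0] using depth_spec hreach v)
  obtain ⟨n, hn⟩ := Nat.exists_eq_succ_of_ne_zero h1
  have hspec : par^[n] (par v) = i := by
    have := depth_spec hreach v
    rwa [hn, Function.iterate_succ_apply] at this
  have h2 : depth hreach (par v) ≤ n := Nat.find_le hspec
  have h3 : depth hreach v ≤ depth hreach (par v) + 1 :=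
    Nat.find_le (by rw [Function.iterate_succ_apply]; exact depth_spec hreach (par v))
  omega

lemma i_not_mem_subtree (hroot : par i = i) {k : Fin m} (hki : k ≠ i) : i ∉ subtree m par k := by
  intro h
  obtain ⟨n, hn⟩ := mem_subtree.1 h
  have : par^[n] i = i := Function.iterate_fixed hroot n
  exact hki (by rw [← hn, this])

end aux

section sums
variable {m : ℕ}

lemma sum_update_eq (w : Fin m) (b : Bool) (F : (Fin m → Bool) → ℝ) :
    (∑ z : Fin m → Bool, if z w = b then F z else 0) =
      ∑ z : Fin m → Bool, if z w = false then F (Function.update z w b) else 0 := by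
  classical
  rw [← Finset.sum_filter, ← Finset.sum_filter]
  apply Finset.sum_nbij' (i := fun z => Function.update z w false)
    (j := fun z => Function.update z w b)
  · intro a ha
    simp [Finset.mem_filter]
  · intro a ha
    simp [Finset.mem_filter]
  · intro a ha
    simp only [Finset.mem_filter, Finset.mem_univ, true_and] at ha
    funext v
    by_cases hv : v = w
    · subst hv; simp [ha]
    · simp [Function.update_of_ne hv]
  · intro a ha
    simp only [Finset.mem_filter, Finset.mem_univ, true_and] at ha
    funext v
    by_cases hv : v = w
    · subst hv; simp [ha]
    · simp [Function.update_of_ne hv]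
  · intro a ha
    simp only [Finset.mem_filter, Finset.mem_univ, true_and] at ha
    congr 1
    funext v
    by_cases hv : v = w
    · subst hv; simp [ha]
    · simp [Function.update_of_ne hv]

lemma sum_split_at (w : Fin m) (F : (Fin m → Bool) → ℝ) :
    (∑ z : Fin m → Bool, F z) =
      ∑ z : Fin m → Bool, if z w = false then
        F (Function.update z w false) + F (Function.update z w true) else 0 := by
  classical
  calc (∑ z : Fin m → Bool, F z)
      = ∑ z : Fin m → Bool,
          ((if z w = false then F z else 0) + (if z w = true then F z else 0)) := by
        apply Finset.sum_congr rfl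
        intro z _
        cases h : z w <;> simp [h]
    _ = (∑ z : Fin m → Bool, if z w = false then F z else 0) +
          ∑ z : Fin m → Bool, if z w = true then F z else 0 := Finset.sum_add_distrib
    _ = (∑ z : Fin m → Bool, if z w = false then F (Function.update z w false) else 0) +
          ∑ z : Fin m → Bool, if z w = false then F (Function.update z w true) else 0 := by
        rw [sum_update_eq w false F, sum_update_eq w true F]
    _ = _ := by
        rw [← Finset.sum_add_distrib]
        apply Finset.sum_congr rfl
        intro z _
        by_cases h : z w = false <;> simp [h]

end sums

section tsum
variable {m : ℕ}

noncomputable def Tsum (par : Fin m → Fin m) (t : Fin m → Bool → Bool → ℝ)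
    (S : Finset (Fin m)) (r : Fin m) (c : Bool) : ℝ :=
  ∑ z : Fin m → Bool,
    if z r = c ∧ ∀ v, v ∉ S → z v = false then
      ∏ v ∈ S.erase r, t v (z v) (z (par v))
    else 0

variable {par : Fin m → Fin m} {i : Fin m} {t : Fin m → Bool → Bool → ℝ}

lemma Tsum_eq_one (hroot : par i = i) (hne : ∀ v, v ≠ i → par v ≠ v)
    (hreach : ∀ v : Fin m, ∃ n : ℕ, par^[n] v = i)
    (ht1 : ∀ v, v ≠ i → ∀ c, t v false c + t v true c = 1)
    (S : Finset (Fin m)) :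
    ∀ r : Fin m, r ∈ S → (∀ v ∈ S, v ≠ r → par v ∈ S) → par r ∉ S.erase r →
      (∀ v ∈ S, v ≠ r → v ≠ i) → ∀ c : Bool, Tsum par t S r c = 1 := by
  classical
  induction S using Finset.strongInduction with
  | _ S ih =>
    intro r hr hclos hpr hiS c
    by_cases hS : S.erase r = ∅
    · -- base case : S = {r}
      have hSr : ∀ v : Fin m, v ∉ S ↔ v ≠ r := by
        intro v
        constructor
        · intro hv hvr; exact hv (hvr ▸ hr)
        · intro hv hvS
          exact hv (by_contra fun h => absurd (Finset.mem_erase.2 ⟨fun hh => (h hh).elim, hvS⟩ : v ∈ S.erase r) (by simp [hS]))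
      have hSr' : ∀ v : Fin m, v ∉ S ↔ v ≠ r := hSr
      set z₀ : Fin m → Bool := fun v => if v = r then c else false with hz₀
      have hcond : ∀ z : Fin m → Bool,
          ((z r = c ∧ ∀ v, v ∉ S → z v = false) ↔ z = z₀) := by
        intro z
        constructor
        · rintro ⟨h1, h2⟩
          funext v
          by_cases hv : v = r
          · subst hv; simp [hz₀, h1]
          · simp [hz₀, hv, h2 v ((hSr v).2 hv)]
        · intro h
          subst h
          constructor
          · simp [hz₀]
          · intro v hv
            simp [hz₀, (hSr v).1 hv]
      unfold Tsum
      rw [hS]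
      calc (∑ z : Fin m → Bool,
              if z r = c ∧ ∀ v, v ∉ S → z v = false then ∏ v ∈ (∅ : Finset (Fin m)), t v (z v) (z (par v)) else 0)
          = ∑ z : Fin m → Bool, if z = z₀ then 1 else 0 := by
            apply Finset.sum_congr rfl
            intro z _
            rw [Finset.prod_empty]
            by_cases h : z = z₀
            · rw [if_pos ((hcond z).mpr h), if_pos h]
            · have : ¬(z r = c ∧ ∀ v, v ∉ S → z v = false) := fun hh => h ((hcond z).1 hh)
              simp [h, this]
        _ = 1 := by simp
    · -- inductive step
      obtain ⟨w, hw, hmax⟩ := Finset.exists_max_image (S.erase r) (depth hreach)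
        (Finset.nonempty_iff_ne_empty.2 hS)
      have hwS : w ∈ S := (Finset.mem_erase.1 hw).2
      have hwr : w ≠ r := (Finset.mem_erase.1 hw).1
      have hwi : w ≠ i := hiS w hwS hwr
      have hnochild : ∀ u ∈ S, par u ≠ w := by
        intro u hu hpu
        by_cases hur : u = r
        · subst hur; exact hpr (hpu ▸ hw)
        · have hui : u ≠ i := hiS u hu hur
          have h1 : depth hreach u = depth hreach w + 1 := by
            rw [depth_par hreach hui, hpu]
          have h2 : depth hreach u ≤ depth hreach w :=
            hmax u (Finset.mem_erase.2 ⟨hur, hu⟩)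
          omega
      have hparw : par w ∈ S := hclos w hwS hwr
      have hparww : par w ≠ w := hne w hwi
      set S' := S.erase w with hS'
      have hstep : Tsum par t S r c = Tsum par t S' r c := by
        unfold Tsum
        rw [sum_split_at w]
        apply Finset.sum_congr rfl
        intro z _
        by_cases hzw : z w = false
        · rw [if_pos hzw]
          have hupd : ∀ b : Bool,
              (if (Function.update z w b) r = c ∧
                  (∀ v, v ∉ S → (Function.update z w b) v = false) then
                ∏ v ∈ S.erase r, t v ((Function.update z w b) v) ((Function.update z w b) (par v))
              else 0) =
              (if z r = c ∧ (∀ v, v ∉ S → z v = false) then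
                t w b (z (par w)) * ∏ v ∈ (S.erase r).erase w, t v (z v) (z (par v))
              else 0) := by
            intro b
            have hcnd : ((Function.update z w b) r = c ∧
                (∀ v, v ∉ S → (Function.update z w b) v = false)) ↔
                (z r = c ∧ ∀ v, v ∉ S → z v = false) := by
              constructor
              · rintro ⟨h1, h2⟩
                refine ⟨by rwa [Function.update_of_ne hwr.symm] at h1, fun v hv => ?_⟩
                have := h2 v hv
                rwa [Function.update_of_ne (fun h => hv (by rw [h]; exact hwS))] at this
              · rintro ⟨h1, h2⟩
                refine ⟨by rwa [Function.update_of_ne hwr.symm], fun v hv => ?_⟩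
                rw [Function.update_of_ne (fun h => hv (by rw [h]; exact hwS))]
                exact h2 v hv
            by_cases hc : z r = c ∧ ∀ v, v ∉ S → z v = false
            · rw [if_pos (hcnd.2 hc), if_pos hc]
              rw [← Finset.mul_prod_erase (S.erase r)
                (fun v => t v ((Function.update z w b) v) ((Function.update z w b) (par v))) hw]
              congr 1
              · rw [Function.update_self, Function.update_of_ne hparww]
              · apply Finset.prod_congr rfl
                intro v hv
                have hvw : v ≠ w := (Finset.mem_erase.1 hv).1
                have hpvw : par v ≠ w :=
                  hnochild v (Finset.mem_erase.1 (Finset.mem_erase.1 hv).2).2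
                rw [Function.update_of_ne hvw, Function.update_of_ne hpvw]
            · rw [if_neg (fun hh => hc (hcnd.1 hh)), if_neg hc]
          rw [hupd false, hupd true]
          by_cases hc : z r = c ∧ ∀ v, v ∉ S → z v = false
          · rw [if_pos hc, if_pos hc]
            have hcnd' : z r = c ∧ ∀ v, v ∉ S' → z v = false := by
              refine ⟨hc.1, fun v hv => ?_⟩
              by_cases hvw : v = w
              · subst hvw; exact hzw
              · exact hc.2 v (fun hvS => hv (Finset.mem_erase.2 ⟨hvw, hvS⟩))
            rw [if_pos hcnd']
            have : (S.erase w).erase r = (S.erase r).erase w := Finset.erase_right_comm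
            rw [hS', this, ← add_mul, ht1 w hwi, one_mul]
          · rw [if_neg hc, if_neg hc, add_zero]
            have : ¬(z r = c ∧ ∀ v, v ∉ S' → z v = false) := by
              rintro ⟨h1, h2⟩
              exact hc ⟨h1, fun v hv => h2 v (fun hvS => hv (Finset.mem_of_mem_erase hvS))⟩
            rw [if_neg this]
        · rw [if_neg hzw]
          have : ¬(z r = c ∧ ∀ v, v ∉ S' → z v = false) := by
            rintro ⟨h1, h2⟩
            exact hzw (h2 w (Finset.notMem_erase w S))
          rw [if_neg this]
      rw [hstep]
      exact ih S' (Finset.erase_ssubset hwS) r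
        (Finset.mem_erase.2 ⟨hwr.symm, hr⟩)
        (fun v hv hvr => Finset.mem_erase.2
          ⟨hnochild v (Finset.mem_of_mem_erase hv),
            hclos v (Finset.mem_of_mem_erase hv) hvr⟩)
        (fun h => hpr (Finset.mem_erase.2
          ⟨(Finset.mem_erase.1 h).1, by
            have h2 := (Finset.mem_erase.1 h).2
            rw [hS'] at h2
            exact Finset.mem_of_mem_erase h2⟩))
        (fun v hv hvr => hiS v (Finset.mem_of_mem_erase hv) hvr) c

end tsum

section wsum
variable {m : ℕ}

noncomputable def Wsum (par : Fin m → Fin m) (t : Fin m → Bool → Bool → ℝ)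
    (g : Fin m → ℝ) (S : Finset (Fin m)) (r : Fin m) (c : Bool) : ℝ :=
  ∑ z : Fin m → Bool,
    if z r = c ∧ ∀ v, v ∉ S → z v = false then
      (∏ v ∈ S.erase r, t v (z v) (z (par v))) * ∏ v ∈ S, (if z v then g v else 1)
    else 0

variable {par : Fin m → Fin m} {i : Fin m} {t : Fin m → Bool → Bool → ℝ} {g : Fin m → ℝ}

lemma Wsum_one_eq_Tsum (S : Finset (Fin m)) (r : Fin m) (c : Bool) :
    Wsum par t (fun _ => (1:ℝ)) S r c = Tsum par t S r c := by
  unfold Wsum Tsum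
  apply Finset.sum_congr rfl
  intro z _
  by_cases h : z r = c ∧ ∀ v, v ∉ S → z v = false
  · rw [if_pos h, if_pos h]
    have : (∏ v ∈ S, (if z v then (1:ℝ) else 1)) = 1 := by simp
    rw [this, mul_one]
  · rw [if_neg h, if_neg h]

lemma Wsum_ge (ht0 : ∀ v, v ≠ i → ∀ a c, 0 ≤ t v a c)
    (hg : ∀ v, 0 < g v ∧ g v ≤ 1)
    (S : Finset (Fin m)) (r : Fin m) (hiS : ∀ v ∈ S, v ≠ r → v ≠ i) (c : Bool) :
    (∏ v ∈ S, g v) * Tsum par t S r c ≤ Wsum par t g S r c := by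
  unfold Wsum Tsum
  rw [Finset.mul_sum]
  apply Finset.sum_le_sum
  intro z _
  by_cases h : z r = c ∧ ∀ v, v ∉ S → z v = false
  · rw [if_pos h, if_pos h, mul_comm]
    apply mul_le_mul_of_nonneg_left
    · apply Finset.prod_le_prod
      · intro v _; exact (hg v).1.le
      · intro v _
        by_cases hz : z v <;> simp [hz, (hg v).2, le_refl]
    · apply Finset.prod_nonneg
      intro v hv
      exact ht0 v (hiS v (Finset.mem_of_mem_erase hv) (Finset.mem_erase.1 hv).1) _ _
  · rw [if_neg h, if_neg h, mul_zero]

lemma Wsum_pos (hroot : par i = i) (hne : ∀ v, v ≠ i → par v ≠ v)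
    (hreach : ∀ v : Fin m, ∃ n : ℕ, par^[n] v = i)
    (ht0 : ∀ v, v ≠ i → ∀ a c, 0 ≤ t v a c)
    (ht1 : ∀ v, v ≠ i → ∀ c, t v false c + t v true c = 1)
    (hg : ∀ v, 0 < g v ∧ g v ≤ 1)
    (S : Finset (Fin m)) (r : Fin m) (hr : r ∈ S)
    (hclos : ∀ v ∈ S, v ≠ r → par v ∈ S) (hpr : par r ∉ S.erase r)
    (hiS : ∀ v ∈ S, v ≠ r → v ≠ i) (c : Bool) :
    0 < Wsum par t g S r c := by
  have h1 := Tsum_eq_one hroot hne hreach ht1 S r hr hclos hpr hiS c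
  have h2 := Wsum_ge (par := par) ht0 hg S r hiS c
  rw [h1, mul_one] at h2
  exact lt_of_lt_of_le (Finset.prod_pos fun v _ => (hg v).1) h2

end wsum

section split
variable {m : ℕ} {par : Fin m → Fin m} {i : Fin m} {t : Fin m → Bool → Bool → ℝ}
  {g : Fin m → ℝ} {k : Fin m}

open Classical in
lemma split_sum (hroot : par i = i) (hki : k ≠ i) (hpark : par k = i)
    (ρ : Bool → ℝ) (c d : Bool) :
    (∑ y : Fin m → Bool, if y i = c ∧ y k = d then
        ρ (y i) * (∏ v ∈ Finset.univ.erase i, t v (y v) (y (par v))) *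
          ∏ v : Fin m, (if y v then g v else 1) else 0)
    = ρ c * t k d c * Wsum par t g (subtree m par k) k d *
        Wsum par t g (Finset.univ \ subtree m par k) i c := by
  set T := subtree m par k with hT
  set C := Finset.univ \ T with hC
  have hkT : k ∈ T := self_mem_subtree k
  have hiT : i ∉ T := i_not_mem_subtree hroot hki
  have hmemC : ∀ v : Fin m, v ∈ C ↔ v ∉ T := by
    intro v; rw [hC, Finset.mem_sdiff]; simp
  have hiC : i ∈ C := (hmemC i).2 hiT
  set Φ : (Fin m → Bool) → ℝ := fun y =>
    ρ (y i) * (∏ v ∈ Finset.univ.erase i, t v (y v) (y (par v))) *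
      ∏ v : Fin m, (if y v then g v else 1) with hΦ
  set comb : (Fin m → Bool) → (Fin m → Bool) → (Fin m → Bool) :=
    fun z₁ z₂ v => if v ∈ T then z₁ v else z₂ v with hcomb
  have key : (∑ y : Fin m → Bool, if y i = c ∧ y k = d then Φ y else 0)
      = ∑ p : (Fin m → Bool) × (Fin m → Bool),
          if (p.1 k = d ∧ ∀ v, v ∉ T → p.1 v = false) ∧
              (p.2 i = c ∧ ∀ v, v ∉ C → p.2 v = false)
          then Φ (comb p.1 p.2) else 0 := by
    rw [← Finset.sum_filter, ← Finset.sum_filter]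
    apply Finset.sum_nbij'
      (i := fun y => ((fun v => if v ∈ T then y v else false),
                      (fun v => if v ∈ T then false else y v)))
      (j := fun p => comb p.1 p.2)
    · intro y hy
      simp only [Finset.mem_filter, Finset.mem_univ, true_and] at hy ⊢
      refine ⟨⟨by simp [hkT, hy.2], fun v hv => by simp [hv]⟩,
        ⟨by simp [hiT, hy.1], fun v hv => ?_⟩⟩
      have : v ∈ T := by
        by_contra hvT
        exact hv ((hmemC v).2 hvT)
      simp [this]
    · intro p hp
      simp only [Finset.mem_filter, Finset.mem_univ, true_and] at hp ⊢
      constructor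
      · show (if i ∈ T then p.1 i else p.2 i) = c
        rw [if_neg hiT]; exact hp.2.1
      · show (if k ∈ T then p.1 k else p.2 k) = d
        rw [if_pos hkT]; exact hp.1.1
    · intro y hy
      funext v
      by_cases hv : v ∈ T <;> simp [hcomb, hv]
    · intro p hp
      simp only [Finset.mem_filter, Finset.mem_univ, true_and] at hp
      have h1 : ∀ v, v ∉ T → p.1 v = false := hp.1.2
      have h2 : ∀ v, v ∉ C → p.2 v = false := hp.2.2
      ext v
      · by_cases hv : v ∈ T
        · simp [hcomb, hv]
        · simp [hcomb, hv, h1 v hv]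
      · by_cases hv : v ∈ T
        · simp [hcomb, hv, (h2 v (fun hvc => ((hmemC v).1 hvc) hv)).symm]
        · simp [hcomb, hv]
    · intro y hy
      congr 1
      funext v
      by_cases hv : v ∈ T <;> simp [hcomb, hv]
  rw [show (∑ y : Fin m → Bool, if y i = c ∧ y k = d then
        ρ (y i) * (∏ v ∈ Finset.univ.erase i, t v (y v) (y (par v))) *
          ∏ v : Fin m, (if y v then g v else 1) else 0) =
      (∑ y : Fin m → Bool, if y i = c ∧ y k = d then Φ y else 0) from rfl, key]
  -- pointwise factorization
  have hfact : ∀ z₁ z₂ : Fin m → Bool,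
      (z₁ k = d ∧ ∀ v, v ∉ T → z₁ v = false) →
      (z₂ i = c ∧ ∀ v, v ∉ C → z₂ v = false) →
      Φ (comb z₁ z₂) = ρ c * t k d c *
        ((∏ v ∈ T.erase k, t v (z₁ v) (z₁ (par v))) * ∏ v ∈ T, (if z₁ v then g v else 1)) *
        ((∏ v ∈ C.erase i, t v (z₂ v) (z₂ (par v))) * ∏ v ∈ C, (if z₂ v then g v else 1)) := by
    intro z₁ z₂ h₁ h₂
    set y := comb z₁ z₂ with hy
    have hyT : ∀ v ∈ T, y v = z₁ v := fun v hv => by simp [hy, hcomb, hv]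
    have hyC : ∀ v, v ∉ T → y v = z₂ v := fun v hv => by simp [hy, hcomb, hv]
    have hyi : y i = c := by rw [hyC i hiT, h₂.1]
    have hset1 : (Finset.univ.erase i).filter (fun v => v ∈ T) = T := by
      ext v
      constructor
      · intro h; exact (Finset.mem_filter.1 h).2
      · intro h
        exact Finset.mem_filter.2
          ⟨Finset.mem_erase.2 ⟨fun hvi => hiT (hvi ▸ h), Finset.mem_univ v⟩, h⟩
    have hset2 : (Finset.univ.erase i).filter (fun v => ¬ v ∈ T) = C.erase i := by
      ext v
      constructor
      · intro h
        rw [Finset.mem_filter, Finset.mem_erase] at h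
        exact Finset.mem_erase.2 ⟨h.1.1, (hmemC v).2 h.2⟩
      · intro h
        rw [Finset.mem_erase] at h
        exact Finset.mem_filter.2
          ⟨Finset.mem_erase.2 ⟨h.1, Finset.mem_univ v⟩, (hmemC v).1 h.2⟩
    have hsplit1 : (∏ v ∈ Finset.univ.erase i, t v (y v) (y (par v)))
        = (∏ v ∈ T, t v (y v) (y (par v))) * ∏ v ∈ C.erase i, t v (y v) (y (par v)) := by
      rw [← Finset.prod_filter_mul_prod_filter_not (Finset.univ.erase i) (fun v => v ∈ T),
        hset1, hset2]
    have hset3 : (Finset.univ : Finset (Fin m)).filter (fun v => v ∈ T) = T := by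
      ext v; simp
    have hset4 : (Finset.univ : Finset (Fin m)).filter (fun v => ¬ v ∈ T) = C := by
      ext v; simp [hmemC v]
    have hsplit2 : (∏ v : Fin m, (if y v then g v else 1))
        = (∏ v ∈ T, (if y v then g v else 1)) * ∏ v ∈ C, (if y v then g v else 1) := by
      rw [← Finset.prod_filter_mul_prod_filter_not Finset.univ (fun v => v ∈ T),
        hset3, hset4]
    have hprodT : (∏ v ∈ T, t v (y v) (y (par v)))
        = t k d c * ∏ v ∈ T.erase k, t v (z₁ v) (z₁ (par v)) := by
      rw [← Finset.mul_prod_erase T _ hkT]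
      congr 1
      · rw [hyT k hkT, h₁.1, hpark, hyi]
      · apply Finset.prod_congr rfl
        intro v hv
        have hvT : v ∈ T := Finset.mem_of_mem_erase hv
        have hpvT : par v ∈ T := par_mem_subtree hvT (Finset.mem_erase.1 hv).1
        rw [hyT v hvT, hyT (par v) hpvT]
    have hprodC : (∏ v ∈ C.erase i, t v (y v) (y (par v)))
        = ∏ v ∈ C.erase i, t v (z₂ v) (z₂ (par v)) := by
      apply Finset.prod_congr rfl
      intro v hv
      have hvT : v ∉ T := (hmemC v).1 (Finset.mem_of_mem_erase hv)
      have hpvT : par v ∉ T := fun h => hvT (mem_subtree_of_par h)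
      rw [hyC v hvT, hyC (par v) hpvT]
    have hfT : (∏ v ∈ T, (if y v then g v else 1)) = ∏ v ∈ T, (if z₁ v then g v else 1) :=
      Finset.prod_congr rfl fun v hv => by rw [hyT v hv]
    have hfC : (∏ v ∈ C, (if y v then g v else 1)) = ∏ v ∈ C, (if z₂ v then g v else 1) :=
      Finset.prod_congr rfl fun v hv => by rw [hyC v ((hmemC v).1 hv)]
    rw [hΦ]
    simp only []
    rw [hyi, hsplit1, hsplit2, hprodT, hprodC, hfT, hfC]
    ring
  -- now split the product sum
  rw [Fintype.sum_prod_type]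
  have : ∀ z₁ z₂ : Fin m → Bool,
      (if (z₁ k = d ∧ ∀ v, v ∉ T → z₁ v = false) ∧
          (z₂ i = c ∧ ∀ v, v ∉ C → z₂ v = false)
       then Φ (comb z₁ z₂) else 0)
      = (ρ c * t k d c) *
        ((if z₁ k = d ∧ ∀ v, v ∉ T → z₁ v = false then
            (∏ v ∈ T.erase k, t v (z₁ v) (z₁ (par v))) * ∏ v ∈ T, (if z₁ v then g v else 1)
          else 0) *
         (if z₂ i = c ∧ ∀ v, v ∉ C → z₂ v = false then
            (∏ v ∈ C.erase i, t v (z₂ v) (z₂ (par v))) * ∏ v ∈ C, (if z₂ v then g v else 1)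
          else 0)) := by
    intro z₁ z₂
    by_cases h₁ : z₁ k = d ∧ ∀ v, v ∉ T → z₁ v = false
    · by_cases h₂ : z₂ i = c ∧ ∀ v, v ∉ C → z₂ v = false
      · rw [if_pos ⟨h₁, h₂⟩, if_pos h₁, if_pos h₂, hfact z₁ z₂ h₁ h₂]
        ring
      · rw [if_neg (fun h => h₂ h.2), if_neg h₂, mul_zero, mul_zero]
    · rw [if_neg (fun h => h₁ h.1), if_neg h₁, zero_mul, mul_zero]
  calc (∑ z₁ : Fin m → Bool, ∑ z₂ : Fin m → Bool,
          if (z₁ k = d ∧ ∀ v, v ∉ T → z₁ v = false) ∧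
              (z₂ i = c ∧ ∀ v, v ∉ C → z₂ v = false)
          then Φ (comb z₁ z₂) else 0)
      = ∑ z₁ : Fin m → Bool, ∑ z₂ : Fin m → Bool, (ρ c * t k d c) *
          ((if z₁ k = d ∧ ∀ v, v ∉ T → z₁ v = false then
              (∏ v ∈ T.erase k, t v (z₁ v) (z₁ (par v))) * ∏ v ∈ T, (if z₁ v then g v else 1)
            else 0) *
           (if z₂ i = c ∧ ∀ v, v ∉ C → z₂ v = false then
              (∏ v ∈ C.erase i, t v (z₂ v) (z₂ (par v))) * ∏ v ∈ C, (if z₂ v then g v else 1)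
            else 0)) := by
        exact Finset.sum_congr rfl fun z₁ _ => Finset.sum_congr rfl fun z₂ _ => this z₁ z₂
    _ = (ρ c * t k d c) * (Wsum par t g T k d * Wsum par t g C i c) := by
        simp only [← Finset.mul_sum]
        rw [← Finset.sum_mul]
        unfold Wsum
        rfl
    _ = ρ c * t k d c * Wsum par t g T k d * Wsum par t g C i c := by ring

end split



/-- The subtree correction factor
`(Σ_d t_k(d,1) g_k(d)) / (Σ_d t_k(d,0) g_k(d))` equals the low-order moment
expression `(Σ_d P(Y_k=d | Y_i=1) P(X=0 | Y_i=0, Y_k=d)) / P(X=0 | Y_i=0)`. -/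
theorem correction_factor_from_low_order_moments (m : ℕ) (i : Fin m)
    (par : Fin m → Fin m)
    (hroot : par i = i) (hne : ∀ v, v ≠ i → par v ≠ v)
    (hreach : ∀ v, ∃ n : ℕ, par^[n] v = i)
    (ρ : Bool → ℝ) (hρ0 : ∀ c, 0 ≤ ρ c) (hρ1 : ρ false + ρ true = 1)
    (t : Fin m → Bool → Bool → ℝ)
    (ht0 : ∀ v, v ≠ i → ∀ a c, 0 ≤ t v a c)
    (ht1 : ∀ v, v ≠ i → ∀ c, t v false c + t v true c = 1)
    (l : ℝ) (hl0 : 0 ≤ l) (hl1 : l < 1)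
    (f : Fin m → ℝ) (hf : ∀ v, 0 < f v ∧ f v ≤ 1)
    (k : Fin m) (hki : k ≠ i) (hpark : par k = i)
    (hρf : 0 < ρ false) (hρt : 0 < ρ true)
    (htk : ∀ d : Bool, 0 < t k d false) :
    (∑ d : Bool, t k d true * gfun m par t f k d) /
        (∑ d : Bool, t k d false * gfun m par t f k d) =
      (∑ d : Bool,
          ((∑ y : Fin m → Bool,
              if y i = true ∧ y k = d then qfun m i par ρ t y else 0) / ρ true) *
            ((∑ y : Fin m → Bool,
                if y i = false ∧ y k = d then
                  qfun m i par ρ t y * Sfun m l f y else 0) /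
              (∑ y : Fin m → Bool,
                if y i = false ∧ y k = d then qfun m i par ρ t y else 0))) /
        ((∑ y : Fin m → Bool,
            if y i = false then qfun m i par ρ t y * Sfun m l f y else 0) / ρ false) := by
  classical
  set T := subtree m par k with hT
  set C := Finset.univ \ T with hC
  have hkT : k ∈ T := self_mem_subtree k
  have hiT : i ∉ T := i_not_mem_subtree hroot hki
  have hmemC : ∀ v : Fin m, v ∈ C ↔ v ∉ T := by
    intro v; rw [hC, Finset.mem_sdiff]; simp
  have hiC : i ∈ C := (hmemC i).2 hiT
  have hclosT : ∀ v ∈ T, v ≠ k → par v ∈ T := fun v hv hvk => par_mem_subtree hv hvk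
  have hprT : par k ∉ T.erase k := by
    rw [hpark]; exact fun h => hiT (Finset.mem_of_mem_erase h)
  have hiST : ∀ v ∈ T, v ≠ k → v ≠ i := fun v hv _ hvi => hiT (hvi ▸ hv)
  have hclosC : ∀ v ∈ C, v ≠ i → par v ∈ C := by
    intro v hv _
    exact (hmemC _).2 fun h => (hmemC v).1 hv (mem_subtree_of_par h)
  have hprC : par i ∉ C.erase i := by
    rw [hroot]; exact fun h => (Finset.mem_erase.1 h).1 rfl
  have hiSC : ∀ v ∈ C, v ≠ i → v ≠ i := fun v _ h => h
  have hq : ∀ y : Fin m → Bool, qfun m i par ρ t y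
      = ρ (y i) * ∏ v ∈ Finset.univ.erase i, t v (y v) (y (par v)) := by
    intro y
    unfold qfun
    congr 1
    rw [← Finset.prod_erase Finset.univ
      (f := fun v => if v = i then 1 else t v (y v) (y (par v))) (a := i) (by simp)]
    exact Finset.prod_congr rfl fun v hv => if_neg (Finset.mem_erase.1 hv).1
  -- identity for pure-q sums
  have A1 : ∀ c d : Bool,
      (∑ y : Fin m → Bool, if y i = c ∧ y k = d then qfun m i par ρ t y else 0)
        = ρ c * t k d c := by
    intro c d
    have e1 : (∑ y : Fin m → Bool, if y i = c ∧ y k = d then qfun m i par ρ t y else 0)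
        = ∑ y : Fin m → Bool, if y i = c ∧ y k = d then
            ρ (y i) * (∏ v ∈ Finset.univ.erase i, t v (y v) (y (par v))) *
              ∏ v : Fin m, (if y v then (1:ℝ) else 1) else 0 := by
      apply Finset.sum_congr rfl
      intro y _
      by_cases h : y i = c ∧ y k = d
      · rw [if_pos h, if_pos h, hq y]
        simp
      · rw [if_neg h, if_neg h]
    rw [e1, split_sum (g := fun _ => (1:ℝ)) hroot hki hpark ρ c d]
    rw [Wsum_one_eq_Tsum, Wsum_one_eq_Tsum,
      Tsum_eq_one hroot hne hreach ht1 T k hkT hclosT hprT hiST d,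
      Tsum_eq_one hroot hne hreach ht1 C i hiC hclosC hprC hiSC c]
    ring
  -- identity for q*S sums
  have A2 : ∀ c d : Bool,
      (∑ y : Fin m → Bool, if y i = c ∧ y k = d then
          qfun m i par ρ t y * Sfun m l f y else 0)
        = (1 - l) * (ρ c * t k d c * Wsum par t f T k d * Wsum par t f C i c) := by
    intro c d
    have e1 : (∑ y : Fin m → Bool, if y i = c ∧ y k = d then
          qfun m i par ρ t y * Sfun m l f y else 0)
        = ∑ y : Fin m → Bool, (1 - l) * (if y i = c ∧ y k = d then
            ρ (y i) * (∏ v ∈ Finset.univ.erase i, t v (y v) (y (par v))) *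
              ∏ v : Fin m, (if y v then f v else 1) else 0) := by
      apply Finset.sum_congr rfl
      intro y _
      by_cases h : y i = c ∧ y k = d
      · rw [if_pos h, if_pos h, hq y]
        unfold Sfun
        ring
      · rw [if_neg h, if_neg h, mul_zero]
    rw [e1, ← Finset.mul_sum, split_sum hroot hki hpark ρ c d]
  -- decompose the single-constraint sum
  have A3 : (∑ y : Fin m → Bool,
        if y i = false then qfun m i par ρ t y * Sfun m l f y else 0)
      = ∑ d : Bool, ∑ y : Fin m → Bool, if y i = false ∧ y k = d then
          qfun m i par ρ t y * Sfun m l f y else 0 := by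
    have step : ∀ y : Fin m → Bool,
        (if y i = false then qfun m i par ρ t y * Sfun m l f y else 0)
          = ∑ d : Bool, if y i = false ∧ y k = d then
              qfun m i par ρ t y * Sfun m l f y else 0 := by
      intro y
      rw [Fintype.sum_bool]
      cases hyk : y k <;> by_cases hyi : y i = false <;> simp [hyk, hyi]
    calc (∑ y : Fin m → Bool,
            if y i = false then qfun m i par ρ t y * Sfun m l f y else 0)
        = ∑ y : Fin m → Bool, ∑ d : Bool, (if y i = false ∧ y k = d then
            qfun m i par ρ t y * Sfun m l f y else 0) :=
          Finset.sum_congr rfl fun y _ => step y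
      _ = _ := Finset.sum_comm
  have hGfun : ∀ d, gfun m par t f k d = Wsum par t f T k d := fun d => rfl
  -- positivity
  have hGpos : ∀ d, 0 < Wsum par t f T k d := fun d =>
    Wsum_pos hroot hne hreach ht0 ht1 hf T k hkT hclosT hprT hiST d
  have hW0 : 0 < Wsum par t f C i false :=
    Wsum_pos hroot hne hreach ht0 ht1 hf C i hiC hclosC hprC hiSC false
  have hl' : (1:ℝ) - l > 0 := by linarith
  set G : Bool → ℝ := fun d => Wsum par t f T k d with hG
  set W0 : ℝ := Wsum par t f C i false with hW
  -- rewrite the goal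
  simp only [hGfun, A1, A2, A3]
  have hnum : ∀ d : Bool,
      (ρ true * t k d true / ρ true) *
        ((1 - l) * (ρ false * t k d false * G d * W0) / (ρ false * t k d false))
      = ((1 - l) * W0) * (t k d true * G d) := by
    intro d
    have h1 : t k d false ≠ 0 := ne_of_gt (htk d)
    have h2 : ρ true ≠ 0 := ne_of_gt hρt
    have h3 : ρ false ≠ 0 := ne_of_gt hρf
    field_simp
  have hden : (∑ d : Bool, (1 - l) * (ρ false * t k d false * G d * W0)) / ρ false
      = ((1 - l) * W0) * ∑ d : Bool, t k d false * G d := by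
    rw [div_eq_iff (ne_of_gt hρf), Finset.mul_sum, Finset.sum_mul]
    exact Finset.sum_congr rfl fun d _ => by ring
  rw [hden]
  have hnum' : (∑ d : Bool,
      (ρ true * t k d true / ρ true) *
        ((1 - l) * (ρ false * t k d false * G d * W0) / (ρ false * t k d false)))
      = ((1 - l) * W0) * ∑ d : Bool, t k d true * G d := by
    rw [Finset.mul_sum]
    exact Finset.sum_congr rfl fun d _ => hnum d
  rw [hnum']
  rw [mul_div_mul_left _ _ (ne_of_gt (mul_pos hl' hW0))]
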